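/- For all integers v ≥ 1 and n ≥ k, the following identity of polynomials in x holds: β^b·Y_{n,β}^{(v)}(x+1;k,a,b) − a^b·Y_{n,β}^{(v)}(x;k,a,b) = 2^{1−k}·(n)_k·Y_{n−k,β}^{(v−1)}(x;k,a,b) (this is the action of the operator β^b·e^t − a^b on Y_{n,β}^{(v)}). -/

import Mathlib

open Polynomial

/-- The exponential generating series `e^{xt} = ∑_{n≥0} xⁿ tⁿ/n!` as a formal power series
in `t` with coefficients in `ℂ[x]`. -/
noncomputable def expX : PowerSeries (Polynomial ℂ) :=
  PowerSeries.mk fun n => (n.factorial : ℂ)⁻¹ • (Polynomial.X : Polynomial ℂ) ^ n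

/-- The exponential generating series `∑_{n≥0} Y_n tⁿ/n!` of a family of polynomials. -/
noncomputable def egf (Y : ℕ → Polynomial ℂ) : PowerSeries (Polynomial ℂ) :=
  PowerSeries.mk fun n => (n.factorial : ℂ)⁻¹ • Y n

/-- The defining identity for the unified Apostol-type polynomials with general constants:
`(B·e^t − A)^v · ∑_{n≥0} Y_n tⁿ/n! = (2^{1−k} t^k)^v · e^{xt}` as formal power series in `t`
over `ℂ[x]`. -/
def ApostolFamilyC (k v : ℕ) (B A : ℂ) (Y : ℕ → Polynomial ℂ) : Prop :=
  (PowerSeries.C (R := Polynomial ℂ) (Polynomial.C B) * PowerSeries.exp (Polynomial ℂ)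
      - PowerSeries.C (R := Polynomial ℂ) (Polynomial.C A)) ^ v * egf Y
    = (PowerSeries.C (R := Polynomial ℂ) (Polynomial.C ((2 : ℂ) ^ ((1 : ℤ) - (k : ℤ)))) *
        PowerSeries.X ^ k) ^ v * expX

/-- `Y` is the family of unified Apostol-type polynomials `Y_{n,β}^{(v)}(x;k,a,b)`:
here `β^b = exp(b·Log β)` is the principal complex power and `a^b` the real power. -/
def ApostolFamily (k v : ℕ) (a b : ℝ) (β : ℂ) (Y : ℕ → Polynomial ℂ) : Prop :=
  ApostolFamilyC k v (β ^ (b : ℂ)) (((a ^ b : ℝ) : ℂ)) Y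

/-- The substitution `x ↦ x + 1` as a ring homomorphism on `ℂ[x]`. -/
noncomputable abbrev phiShift : Polynomial ℂ →+* Polynomial ℂ :=
  Polynomial.eval₂RingHom Polynomial.C (Polynomial.X + 1)

lemma map_phiShift_expX :
    PowerSeries.map phiShift expX = PowerSeries.exp (Polynomial ℂ) * expX := by
  refine PowerSeries.ext fun n => ?_
  rw [PowerSeries.coeff_map, PowerSeries.coeff_mul]
  rw [Finset.Nat.sum_antidiagonal_eq_sum_range_succ
    (f := fun i j => PowerSeries.coeff i (PowerSeries.exp (Polynomial ℂ)) *
      PowerSeries.coeff j expX)]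
  rw [← Finset.sum_range_reflect (fun j => PowerSeries.coeff (R := Polynomial ℂ) j
    (PowerSeries.exp (Polynomial ℂ)) * PowerSeries.coeff (R := Polynomial ℂ) (n - j) expX) (n+1)]
  simp only [expX, PowerSeries.coeff_mk, PowerSeries.coeff_exp, Polynomial.algebraMap_apply]
  have hphi : phiShift ((n.factorial : ℂ)⁻¹ • (Polynomial.X : Polynomial ℂ) ^ n)
      = (n.factorial : ℂ)⁻¹ • ((Polynomial.X : Polynomial ℂ) + 1) ^ n := by
    simp [Polynomial.smul_eq_C_mul]
  rw [hphi]
  rw [Commute.add_pow (Commute.one_right _)]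
  rw [Finset.smul_sum]
  simp only [Nat.add_sub_cancel]
  apply Finset.sum_congr rfl
  intro j hj
  have hj' : j ≤ n := Nat.lt_succ_iff.mp (Finset.mem_range.mp hj)
  have h1 : n - (n - j) = j := Nat.sub_sub_self hj'
  rw [h1]
  have h2 : ((algebraMap ℚ ℂ) (1 / ((n - j).factorial : ℚ))) = ((n-j).factorial : ℂ)⁻¹ := by
    push_cast; simp
  rw [h2, one_pow, mul_one, ← Polynomial.C_eq_natCast]
  have f1 : (j.factorial : ℂ) ≠ 0 := Nat.cast_ne_zero.mpr j.factorial_ne_zero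
  have f2 : ((n-j).factorial : ℂ) ≠ 0 := Nat.cast_ne_zero.mpr (n-j).factorial_ne_zero
  have f3 : (n.factorial : ℂ) ≠ 0 := Nat.cast_ne_zero.mpr n.factorial_ne_zero
  have key : ((n.factorial : ℂ))⁻¹ * ((n.choose j : ℕ) : ℂ)
      = (((n-j).factorial : ℂ))⁻¹ * ((j.factorial : ℂ))⁻¹ := by
    rw [Nat.cast_choose ℂ hj']
    field_simp
  rw [Polynomial.smul_eq_C_mul, Polynomial.smul_eq_C_mul]
  calc Polynomial.C ((n.factorial : ℂ))⁻¹ * (Polynomial.X ^ j * Polynomial.C ((n.choose j : ℕ) : ℂ))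
      = Polynomial.C (((n.factorial : ℂ))⁻¹ * ((n.choose j : ℕ) : ℂ)) * Polynomial.X ^ j := by
        rw [Polynomial.C_mul]; ring
    _ = Polynomial.C (((n-j).factorial : ℂ))⁻¹ *
          (Polynomial.C ((j.factorial : ℂ))⁻¹ * Polynomial.X ^ j) := by
        rw [key, Polynomial.C_mul]; ring

/-- Action of the operator `β^b e^t − a^b`: for `v ≥ 1` and `n ≥ k`,
`β^b·Y_{n,β}^{(v)}(x+1;k,a,b) − a^b·Y_{n,β}^{(v)}(x;k,a,b)
  = 2^{1−k}·(n)_k·Y_{n−k,β}^{(v−1)}(x;k,a,b)`. -/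
theorem apostol_operator_identity (k v : ℕ) (a b : ℝ) (β : ℂ)
    (ha : 0 < a) (hb : 0 < b) (hβ : β ≠ 0) (hv : 1 ≤ v)
    (Y Y' : ℕ → Polynomial ℂ)
    (hY : ApostolFamily k v a b β Y) (hY' : ApostolFamily k (v - 1) a b β Y')
    (n : ℕ) (hn : k ≤ n) :
    Polynomial.C (β ^ (b : ℂ)) * (Y n).comp (Polynomial.X + 1)
        - Polynomial.C (((a ^ b : ℝ) : ℂ)) * Y n
      = Polynomial.C ((2 : ℂ) ^ ((1 : ℤ) - (k : ℤ)) * (n.descFactorial k : ℂ)) *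
          Y' (n - k) := by
  set B : ℂ := β ^ (b : ℂ) with hBdef
  set A : ℂ := ((a ^ b : ℝ) : ℂ) with hAdef
  set c2 : ℂ := (2 : ℂ) ^ ((1 : ℤ) - (k : ℤ)) with hc2def
  set S : PowerSeries (Polynomial ℂ) :=
    PowerSeries.C (R := Polynomial ℂ) (Polynomial.C B) * PowerSeries.exp (Polynomial ℂ)
      - PowerSeries.C (R := Polynomial ℂ) (Polynomial.C A) with hSdef
  set G : PowerSeries (Polynomial ℂ) :=
    PowerSeries.C (R := Polynomial ℂ) (Polynomial.C c2) * PowerSeries.X ^ k with hGdef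
  have hB : B ≠ 0 := by
    rw [hBdef]
    simp [Complex.cpow_eq_zero_iff, hβ]
  have hS : S ≠ 0 := by
    intro h
    have h1 := congrArg (PowerSeries.coeff (R := Polynomial ℂ) 1) h
    rw [hSdef] at h1
    simp only [map_sub, PowerSeries.coeff_C_mul, PowerSeries.coeff_exp, PowerSeries.coeff_C,
      one_ne_zero, if_false, sub_zero, map_zero] at h1
    have : (Polynomial.C B : Polynomial ℂ) = 0 := by
      simpa [Polynomial.algebraMap_apply] using h1
    exact hB (Polynomial.C_eq_zero.mp this)
  have hYe : S ^ v * egf Y = G ^ v * expX := hY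
  have hY'e : S ^ (v - 1) * egf Y' = G ^ (v - 1) * expX := hY'
  obtain ⟨w, rfl⟩ : ∃ w, v = w + 1 := ⟨v - 1, (Nat.succ_pred_eq_of_pos hv).symm⟩
  rw [Nat.add_sub_cancel] at hY'e
  -- Step 1: S * egf Y = G * egf Y'
  have key1 : S * egf Y = G * egf Y' := by
    have hcan : S ^ w * (S * egf Y) = S ^ w * (G * egf Y') := by
      calc S ^ w * (S * egf Y) = S ^ (w + 1) * egf Y := by ring
        _ = G ^ (w + 1) * expX := hYe
        _ = G * (G ^ w * expX) := by ring
        _ = G * (S ^ w * egf Y') := by rw [hY'e]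
        _ = S ^ w * (G * egf Y') := by ring
    exact mul_left_cancel₀ (pow_ne_zero w hS) hcan
  -- Step 2: map phiShift (egf Y) = exp * egf Y
  have hmapS : PowerSeries.map phiShift S = S := by
    rw [hSdef]
    refine PowerSeries.ext fun m => ?_
    simp [PowerSeries.coeff_exp, Polynomial.algebraMap_apply, PowerSeries.coeff_C,
      apply_ite phiShift]
  have hmapG : PowerSeries.map phiShift G = G := by
    rw [hGdef]
    simp [PowerSeries.coeff_C]
  have key2 : PowerSeries.map phiShift (egf Y) = PowerSeries.exp (Polynomial ℂ) * egf Y := by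
    have hm := congrArg (PowerSeries.map phiShift) hYe
    rw [map_mul, map_mul, map_pow, map_pow, hmapS, hmapG, map_phiShift_expX] at hm
    have hm2 : S ^ (w + 1) * PowerSeries.map phiShift (egf Y)
        = S ^ (w + 1) * (PowerSeries.exp (Polynomial ℂ) * egf Y) := by
      calc S ^ (w + 1) * PowerSeries.map phiShift (egf Y)
          = G ^ (w + 1) * (PowerSeries.exp (Polynomial ℂ) * expX) := hm
        _ = PowerSeries.exp (Polynomial ℂ) * (G ^ (w + 1) * expX) := by ring
        _ = PowerSeries.exp (Polynomial ℂ) * (S ^ (w + 1) * egf Y) := by rw [hYe]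
        _ = S ^ (w + 1) * (PowerSeries.exp (Polynomial ℂ) * egf Y) := by ring
    exact mul_left_cancel₀ (pow_ne_zero (w + 1) hS) hm2
  -- Step 3: the series identity for the operator
  have key3 : PowerSeries.C (R := Polynomial ℂ) (Polynomial.C B) * PowerSeries.map phiShift (egf Y)
      - PowerSeries.C (R := Polynomial ℂ) (Polynomial.C A) * egf Y = G * egf Y' := by
    rw [key2, ← key1, hSdef]; ring
  -- Step 4: extract coefficient n
  have hco := congrArg (PowerSeries.coeff (R := Polynomial ℂ) n) key3
  rw [map_sub, PowerSeries.coeff_C_mul, PowerSeries.coeff_C_mul, hGdef, mul_assoc,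
    PowerSeries.coeff_C_mul] at hco
  have hXk : PowerSeries.coeff (R := Polynomial ℂ) n (PowerSeries.X ^ k * egf Y')
      = ((n - k).factorial : ℂ)⁻¹ • Y' (n - k) := by
    have h := PowerSeries.coeff_X_pow_mul (egf Y') k (n - k)
    rw [Nat.sub_add_cancel hn] at h
    rw [h, egf, PowerSeries.coeff_mk]
  rw [hXk, PowerSeries.coeff_map] at hco
  simp only [egf, PowerSeries.coeff_mk] at hco
  have hphiY : phiShift ((n.factorial : ℂ)⁻¹ • Y n)
      = (n.factorial : ℂ)⁻¹ • (Y n).comp (Polynomial.X + 1) := by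
    have h0 : phiShift ((n.factorial : ℂ)⁻¹ • Y n) = (n.factorial : ℂ)⁻¹ • phiShift (Y n) := by
      simp [Polynomial.smul_eq_C_mul]
    exact h0
  rw [hphiY] at hco
  -- Multiply through by n!
  have hfn : (n.factorial : ℂ) ≠ 0 := Nat.cast_ne_zero.mpr n.factorial_ne_zero
  have hfnk : ((n - k).factorial : ℂ) ≠ 0 := Nat.cast_ne_zero.mpr (n - k).factorial_ne_zero
  have hdesc : (n.factorial : ℂ) * (((n - k).factorial : ℂ))⁻¹ = (n.descFactorial k : ℂ) := by
    have h := Nat.factorial_mul_descFactorial hn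
    have h' : ((n - k).factorial : ℂ) * (n.descFactorial k : ℂ) = (n.factorial : ℂ) := by
      exact_mod_cast congrArg (Nat.cast : ℕ → ℂ) h
    rw [← h', mul_comm (((n - k).factorial : ℂ)) _, mul_assoc, mul_inv_cancel₀ hfnk, mul_one]
  have h2 := congrArg (fun p => (n.factorial : ℂ) • p) hco
  simp only [smul_sub, mul_smul_comm, smul_smul, mul_inv_cancel₀ hfn, one_smul] at h2
  rw [hdesc] at h2
  rw [Polynomial.smul_eq_C_mul, ← mul_assoc, ← Polynomial.C_mul] at h2
  rw [mul_comm c2 ((n.descFactorial k : ℂ))]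
  exact h2
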